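/- For any C ∈ [-1,1] and any k ≥ 1: Σ_{S,Ŝ ∈ {-1,1}^k} (∏_{j=1}^k (1 + S_j Ŝ_j C)/4) · sgn(Σ_j S_j Ŝ_j) = Σ_{S ∈ {-1,1}^k} (∏_{j=1}^k (1 + S_j C)/2) · sgn(Σ_j S_j). In particular, with T(C) = tanh²(β) times the left-hand side and f_χ(m) = tanh(β)·Σ_S (∏_j (1+S_j m)/2)·sgn(Σ_j S_j), one has T(C) = tanh(β)·f_χ(C). -/

import Mathlib

/-- `pm b` maps a Boolean to the spin value ±1. -/
noncomputable def pm (b : Bool) : ℝ := if b then 1 else -1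

lemma pm_mul_pm (a b : Bool) : pm a * pm b = pm (a == b) := by
  cases a <;> cases b <;> norm_num [pm]

/-- The two-replica majority correlation sum collapses to the single-replica majority
magnetization sum; consequently `T(C) = tanh(β)·f_χ(C)`. -/
theorem stmt6 (k : ℕ) (hk : 0 < k) (β : ℝ) (hβ : 0 < β)
    (C : ℝ) (hC : C ∈ Set.Icc (-1:ℝ) 1)
    (T fχ : ℝ → ℝ)
    (hT : ∀ c, T c = Real.tanh β ^ 2 *
      ∑ S : Fin k → Bool, ∑ S' : Fin k → Bool,
        (∏ j, (1 + pm (S j) * pm (S' j) * c) / 4) * Real.sign (∑ j, pm (S j) * pm (S' j)))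
    (hf : ∀ m, fχ m = Real.tanh β *
      ∑ S : Fin k → Bool, (∏ j, (1 + pm (S j) * m) / 2) * Real.sign (∑ j, pm (S j))) :
    (∑ S : Fin k → Bool, ∑ S' : Fin k → Bool,
        (∏ j, (1 + pm (S j) * pm (S' j) * C) / 4) * Real.sign (∑ j, pm (S j) * pm (S' j))
      = ∑ S : Fin k → Bool, (∏ j, (1 + pm (S j) * C) / 2) * Real.sign (∑ j, pm (S j)))
    ∧ T C = Real.tanh β * fχ C := by
  have key : ∀ S : Fin k → Bool,
      (∑ S' : Fin k → Bool, (∏ j, (1 + pm (S j) * pm (S' j) * C) / 4) *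
          Real.sign (∑ j, pm (S j) * pm (S' j)))
      = ∑ U : Fin k → Bool, (∏ j, (1 + pm (U j) * C) / 4) * Real.sign (∑ j, pm (U j)) := by
    intro S
    apply Fintype.sum_bijective (fun S' : Fin k → Bool => fun j => (S j == S' j))
    · have hinv : Function.Involutive (fun S' : Fin k → Bool => fun j => (S j == S' j)) := by
        intro f; funext j; show (S j == (S j == f j)) = f j; cases S j <;> cases f j <;> rfl
      exact hinv.bijective
    · intro S'
      congr 1
      · exact Finset.prod_congr rfl fun j _ => by rw [pm_mul_pm]
      · congr 1
        exact Finset.sum_congr rfl fun j _ => by rw [pm_mul_pm]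
  have h1 : (∑ S : Fin k → Bool, ∑ S' : Fin k → Bool,
        (∏ j, (1 + pm (S j) * pm (S' j) * C) / 4) * Real.sign (∑ j, pm (S j) * pm (S' j)))
      = ∑ S : Fin k → Bool, (∏ j, (1 + pm (S j) * C) / 2) * Real.sign (∑ j, pm (S j)) := by
    calc (∑ S : Fin k → Bool, ∑ S' : Fin k → Bool,
        (∏ j, (1 + pm (S j) * pm (S' j) * C) / 4) * Real.sign (∑ j, pm (S j) * pm (S' j)))
        = ∑ _S : Fin k → Bool, ∑ U : Fin k → Bool,
            (∏ j, (1 + pm (U j) * C) / 4) * Real.sign (∑ j, pm (U j)) :=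
          Finset.sum_congr rfl fun S _ => key S
      _ = (2:ℝ)^k * ∑ U : Fin k → Bool,
            (∏ j, (1 + pm (U j) * C) / 4) * Real.sign (∑ j, pm (U j)) := by
          rw [Finset.sum_const, Finset.card_univ, nsmul_eq_mul]
          norm_num [Fintype.card_fun]
      _ = ∑ U : Fin k → Bool,
            (∏ j, (1 + pm (U j) * C) / 2) * Real.sign (∑ j, pm (U j)) := by
          rw [Finset.mul_sum]
          refine Finset.sum_congr rfl fun U _ => ?_
          rw [← mul_assoc]
          congr 1
          rw [Finset.prod_div_distrib, Finset.prod_div_distrib, Finset.prod_const,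
            Finset.prod_const, Finset.card_univ, Fintype.card_fin]
          rw [show (4:ℝ) = 2 * 2 by norm_num, mul_pow]
          have h2 : (2:ℝ)^k ≠ 0 := by positivity
          field_simp
          ring_nf
          exact Finset.prod_congr rfl fun x _ => by ring
  refine ⟨h1, ?_⟩
  rw [hT, hf, h1, pow_two]
  ring
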